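/- Let S_n be the sum of n i.i.d. mean-1 exponentials Y_1,…,Y_n. For fixed u ∈ (0,1] and δ ∈ (0,u), P(max_i Y_i ≥ δ | S_n ≤ u) ≤ 3 e^{δ} ((u−δ)/u)^{n−1} n²/u for n ≥ 2, and hence P(max_i Y_i < δ | S_n ≤ u) → 1 as n → ∞. -/

import Mathlib

open MeasureTheory ProbabilityTheory Filter Set
open scoped ENNReal Topology

instance : IsProbabilityMeasure (expMeasure 1) := isProbabilityMeasure_expMeasure one_pos

noncomputable def expPi (n : ℕ) : Measure (Fin n → ℝ) := Measure.pi fun _ => expMeasure 1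

noncomputable def G (n : ℕ) (t : ℝ) : ℝ≥0∞ := expPi n {x | ∑ i, x i ≤ t}

instance (n : ℕ) : IsProbabilityMeasure (expPi n) := by
  unfold expPi; infer_instance

lemma measurableSet_sumle (n : ℕ) (t : ℝ) : MeasurableSet {x : Fin n → ℝ | ∑ i, x i ≤ t} := by
  exact measurableSet_le (by fun_prop) measurable_const

lemma expMeasure_neg : expMeasure 1 (Iio 0) = 0 := by
  rw [expMeasure, gammaMeasure, withDensity_apply _ measurableSet_Iio]
  exact lintegral_gammaPDF_of_nonpos le_rfl

lemma expMeasure_ae_nonneg : ∀ᵐ y ∂(expMeasure 1), 0 ≤ y := by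
  rw [ae_iff]
  convert expMeasure_neg using 2
  ext y; simp [Iio]

lemma G_rec (n : ℕ) (t : ℝ) : G (n + 1) t = ∫⁻ y, G n (t - y) ∂(expMeasure 1) := by
  have hmp := measurePreserving_piFinSuccAbove (fun _ : Fin (n+1) => expMeasure 1) 0
  have hs : MeasurableSet {x : Fin (n+1) → ℝ | ∑ i, x i ≤ t} := measurableSet_sumle _ _
  have := (MeasurePreserving.symm _ hmp).measure_preimage hs.nullMeasurableSet
  rw [G, expPi, ← this]
  have hpre : (MeasurableEquiv.piFinSuccAbove (fun _ => ℝ) 0).symm ⁻¹' {x : Fin (n+1) → ℝ | ∑ i, x i ≤ t}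
      = {p : ℝ × (Fin n → ℝ) | ∑ i, p.2 i ≤ t - p.1} := by
    ext ⟨y, z⟩
    simp only [Set.mem_preimage, Set.mem_setOf_eq, MeasurableEquiv.piFinSuccAbove,
      MeasurableEquiv.symm, MeasurableEquiv.coe_mk, Equiv.symm_symm, Fin.insertNthEquiv_apply]
    rw [Fin.sum_univ_succAbove _ 0]
    simp [Fin.insertNth_apply_same, Fin.insertNth_apply_succAbove]
    constructor <;> intro h <;> linarith
  rw [hpre, Measure.prod_apply]
  · rfl
  · exact measurableSet_le (by fun_prop) (by fun_prop)

lemma G_zero_of_neg : ∀ n : ℕ, ∀ t : ℝ, t < 0 → G n t = 0 := by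
  intro n
  induction n with
  | zero =>
    intro t ht
    have : {x : Fin 0 → ℝ | ∑ i, x i ≤ t} = ∅ := by
      ext x; simp; linarith
    rw [G, this]; simp
  | succ n ih =>
    intro t ht
    rw [G_rec]
    rw [lintegral_congr_ae (g := fun _ => 0), lintegral_zero]
    filter_upwards [expMeasure_ae_nonneg] with y hy
    exact ih _ (by linarith)

lemma integral_aux (n : ℕ) {t : ℝ} (ht : 0 ≤ t) :
    ∫ y in Icc (0:ℝ) t, (t - y) ^ n = t ^ (n+1) / (n+1) := by
  rw [integral_Icc_eq_integral_Ioc, ← intervalIntegral.integral_of_le ht]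
  rw [intervalIntegral.integral_comp_sub_left (fun x => x ^ n) t]
  simp [integral_pow]

lemma exponentialPDF_le_one (y : ℝ) : exponentialPDF 1 y ≤ 1 := by
  rw [exponentialPDF_eq]
  split_ifs with h
  · rw [show (1:ℝ≥0∞) = ENNReal.ofReal 1 by simp]
    apply ENNReal.ofReal_le_ofReal
    rw [one_mul]
    exact Real.exp_le_one_iff.2 (by linarith)
  · simp

lemma expMeasure_lintegral (f : ℝ → ℝ≥0∞) (hf : Measurable f) :
    ∫⁻ y, f y ∂(expMeasure 1) = ∫⁻ y, exponentialPDF 1 y * f y := by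
  rw [expMeasure, gammaMeasure, lintegral_withDensity_eq_lintegral_mul _ (by unfold gammaPDF; exact (measurable_gammaPDFReal 1 1).ennreal_ofReal) hf]
  rfl

lemma G_le : ∀ n : ℕ, ∀ t : ℝ, 0 ≤ t → G n t ≤ ENNReal.ofReal (t ^ n / n.factorial) := by
  intro n
  induction n with
  | zero =>
    intro t ht
    simp only [pow_zero, Nat.factorial_zero, Nat.cast_one, div_one, ENNReal.ofReal_one]
    exact prob_le_one
  | succ n ih =>
    intro t ht
    rw [G_rec]
    set F : ℝ → ℝ≥0∞ := (Icc 0 t).indicator (fun y => ENNReal.ofReal ((t - y) ^ n / n.factorial)) with hF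
    have hFmeas : Measurable F := by
      apply Measurable.indicator _ measurableSet_Icc
      fun_prop
    have hbound : ∀ᵐ y ∂(expMeasure 1), G n (t - y) ≤ F y := by
      filter_upwards [expMeasure_ae_nonneg] with y hy
      rcases le_or_gt y t with h | h
      · rw [hF, indicator_of_mem (mem_Icc.2 ⟨hy, h⟩)]
        exact ih _ (by linarith)
      · rw [hF, indicator_of_notMem (by simp [mem_Icc]; intro; linarith)]
        rw [G_zero_of_neg n _ (by linarith)]
    calc ∫⁻ y, G n (t - y) ∂(expMeasure 1) ≤ ∫⁻ y, F y ∂(expMeasure 1) := lintegral_mono_ae hbound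
      _ = ∫⁻ y, exponentialPDF 1 y * F y := expMeasure_lintegral F hFmeas
      _ ≤ ∫⁻ y, F y := by
          apply lintegral_mono
          intro y
          calc exponentialPDF 1 y * F y ≤ 1 * F y :=
                mul_le_mul_left (exponentialPDF_le_one y) _
            _ = F y := one_mul _
      _ = ∫⁻ y in Icc 0 t, ENNReal.ofReal ((t - y) ^ n / n.factorial) := lintegral_indicator measurableSet_Icc _
      _ = ENNReal.ofReal (∫ y in Icc (0:ℝ) t, (t - y) ^ n / n.factorial) := by
          rw [MeasureTheory.ofReal_integral_eq_lintegral_ofReal]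
          · apply Integrable.div_const
            apply ContinuousOn.integrableOn_compact isCompact_Icc
            fun_prop
          · filter_upwards [ae_restrict_mem measurableSet_Icc] with y hy
            have h2 : 0 ≤ t - y := by linarith [hy.2]
            positivity
      _ ≤ ENNReal.ofReal (t ^ (n+1) / (n+1).factorial) := by
          apply ENNReal.ofReal_le_ofReal
          rw [integral_div, integral_aux n ht, div_div, Nat.factorial_succ]
          push_cast
          exact le_of_eq (by ring)

lemma le_G : ∀ n : ℕ, ∀ t : ℝ, 0 ≤ t →
    ENNReal.ofReal (Real.exp (-t) * t ^ n / n.factorial) ≤ G n t := by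
  intro n
  induction n with
  | zero =>
    intro t ht
    have : {x : Fin 0 → ℝ | ∑ i, x i ≤ t} = univ := by
      ext x; simp; linarith
    rw [G, this]
    simp only [measure_univ, pow_zero, Nat.factorial_zero, Nat.cast_one, mul_one, div_one]
    exact ENNReal.ofReal_le_one.2 (Real.exp_le_one_iff.2 (by linarith))
  | succ n ih =>
    intro t ht
    rw [G_rec]
    set L : ℝ → ℝ≥0∞ := (Icc 0 t).indicator
      (fun y => ENNReal.ofReal (Real.exp (-(t - y)) * (t - y) ^ n / n.factorial)) with hL
    have hLmeas : Measurable L := by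
      apply Measurable.indicator _ measurableSet_Icc
      fun_prop
    have hbound : ∀ᵐ y ∂(expMeasure 1), L y ≤ G n (t - y) := by
      filter_upwards [] with y
      rcases Classical.em (y ∈ Icc 0 t) with h | h
      · rw [hL, indicator_of_mem h]
        exact ih _ (by simpa using h.2)
      · rw [hL, indicator_of_notMem h]
        exact zero_le
    refine le_trans ?_ (lintegral_mono_ae hbound)
    rw [expMeasure_lintegral L hLmeas]
    have hptwise : (fun y => exponentialPDF 1 y * L y) = (Icc 0 t).indicator
        (fun y => ENNReal.ofReal (Real.exp (-t) * (t - y) ^ n / n.factorial)) := by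
      funext y
      rcases Classical.em (y ∈ Icc 0 t) with h | h
      · rw [hL, indicator_of_mem h, indicator_of_mem h,
          exponentialPDF_of_nonneg h.1, ← ENNReal.ofReal_mul (by positivity)]
        congr 1
        rw [one_mul, mul_div_assoc, ← mul_assoc, ← Real.exp_add]
        ring_nf
      · rw [hL, indicator_of_notMem h, indicator_of_notMem h, mul_zero]
    rw [hptwise, lintegral_indicator measurableSet_Icc]
    rw [← MeasureTheory.ofReal_integral_eq_lintegral_ofReal]
    · apply ENNReal.ofReal_le_ofReal
      have heq : ∀ x : ℝ, Real.exp (-t) * (t - x) ^ n / (n.factorial : ℝ)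
          = (Real.exp (-t) / n.factorial) * (t - x) ^ n := fun x => by ring
      simp_rw [heq, integral_const_mul, integral_aux n ht, Nat.factorial_succ]
      have h1 : (n.factorial : ℝ) ≠ 0 := Nat.cast_ne_zero.2 (Nat.factorial_ne_zero n)
      have h2 : ((n : ℝ) + 1) ≠ 0 := by positivity
      refine le_of_eq ?_
      push_cast
      field_simp
    · apply Integrable.div_const
      apply ContinuousOn.integrableOn_compact isCompact_Icc
      fun_prop
    · filter_upwards [ae_restrict_mem measurableSet_Icc] with y hy
      have h2 : 0 ≤ t - y := by linarith [hy.2]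
      positivity

lemma expPi_ae_nonneg (n : ℕ) : ∀ᵐ x ∂(expPi n), ∀ j, 0 ≤ x j := by
  rw [ae_iff]
  have : {x : Fin n → ℝ | ¬ ∀ j, 0 ≤ x j} = ⋃ j, (fun x : Fin n → ℝ => x j) ⁻¹' Iio 0 := by
    ext x; simp [not_le]
  rw [this]
  refine measure_iUnion_null fun j => ?_
  exact Measure.pi_eval_preimage_null _ expMeasure_neg

lemma expPi_tail_event (m : ℕ) (i : Fin (m + 1)) (v : ℝ) :
    expPi (m + 1) {x : Fin (m + 1) → ℝ | ∑ k, x (i.succAbove k) ≤ v} = G m v := by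
  have hmp := measurePreserving_piFinSuccAbove (fun _ : Fin (m+1) => expMeasure 1) i
  have hs : MeasurableSet {x : Fin (m+1) → ℝ | ∑ k, x (i.succAbove k) ≤ v} :=
    measurableSet_le (by fun_prop) measurable_const
  have := (MeasurePreserving.symm _ hmp).measure_preimage hs.nullMeasurableSet
  rw [expPi, ← this]
  have hpre : (MeasurableEquiv.piFinSuccAbove (fun _ => ℝ) i).symm ⁻¹'
      {x : Fin (m+1) → ℝ | ∑ k, x (i.succAbove k) ≤ v}
      = {p : ℝ × (Fin m → ℝ) | ∑ k, p.2 k ≤ v} := by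
    ext ⟨y, z⟩
    simp only [Set.mem_preimage, Set.mem_setOf_eq, MeasurableEquiv.piFinSuccAbove,
      MeasurableEquiv.symm, MeasurableEquiv.coe_mk, Equiv.symm_symm, Fin.insertNthEquiv_apply,
      Fin.insertNth_apply_succAbove]
  rw [hpre, Measure.prod_apply (measurableSet_le (by fun_prop) (by fun_prop))]
  have hfib : ∀ y : ℝ, (Prod.mk y ⁻¹' {p : ℝ × (Fin m → ℝ) | ∑ k, p.2 k ≤ v})
      = {z : Fin m → ℝ | ∑ k, z k ≤ v} := fun y => rfl
  simp only [hfib]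
  rw [lintegral_const, measure_univ, mul_one]
  rfl

lemma expPi_union_bound (m : ℕ) {u δ : ℝ} (hδ : 0 < δ) :
    expPi (m + 1) {x : Fin (m + 1) → ℝ | (∑ i, x i ≤ u) ∧ ∃ i, δ ≤ x i}
      ≤ (m + 1) * G m (u - δ) := by
  set S := fun i : Fin (m+1) => {x : Fin (m + 1) → ℝ | (∑ j, x j ≤ u) ∧ δ ≤ x i} with hS
  have hsub : {x : Fin (m + 1) → ℝ | (∑ i, x i ≤ u) ∧ ∃ i, δ ≤ x i} ⊆ ⋃ i, S i := by
    rintro x ⟨hx, i, hi⟩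
    exact Set.mem_iUnion.2 ⟨i, hx, hi⟩
  calc expPi (m + 1) {x : Fin (m + 1) → ℝ | (∑ i, x i ≤ u) ∧ ∃ i, δ ≤ x i}
      ≤ ∑ i : Fin (m+1), expPi (m+1) (S i) :=
        le_trans (measure_mono hsub) (measure_iUnion_fintype_le _ _)
    _ ≤ ∑ _i : Fin (m+1), G m (u - δ) := by
        refine Finset.sum_le_sum fun i _ => ?_
        have hN : expPi (m+1) {x : Fin (m+1) → ℝ | ¬ ∀ j, 0 ≤ x j} = 0 := by
          have := expPi_ae_nonneg (m+1)
          rwa [ae_iff] at this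
        calc expPi (m+1) (S i)
            ≤ expPi (m+1) (S i ∩ {x | ∀ j, 0 ≤ x j})
              + expPi (m+1) (S i \ {x | ∀ j, 0 ≤ x j}) := measure_le_inter_add_diff _ _ _
          _ ≤ expPi (m+1) {x : Fin (m + 1) → ℝ | ∑ k, x (i.succAbove k) ≤ u - δ} + 0 := by
              gcongr
              · rintro x ⟨⟨hsum, hxi⟩, hpos⟩
                have hdecomp : ∑ j, x j = x i + ∑ k, x (i.succAbove k) :=
                  Fin.sum_univ_succAbove x i
                simp only [Set.mem_setOf_eq]
                linarith
              · exact le_trans (measure_mono fun x hx => hx.2) (le_of_eq hN)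
          _ = G m (u - δ) := by rw [add_zero, expPi_tail_event]
    _ = (m + 1) * G m (u - δ) := by
        rw [Finset.sum_const, Finset.card_univ, Fintype.card_fin, nsmul_eq_mul]
        norm_cast

lemma map_pi {Ω : Type*} [MeasureSpace Ω] [IsProbabilityMeasure (ℙ : Measure Ω)]
    {n : ℕ} (Y : Fin n → Ω → ℝ) (hmeas : ∀ i, Measurable (Y i))
    (hindep : iIndepFun Y ℙ)
    (hdist : ∀ i, Measure.map (Y i) ℙ = expMeasure 1) :
    Measure.map (fun ω (i : Fin n) => Y i ω) ℙ = expPi n := by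
  have h : ∀ s : Fin n → Set ℝ, (∀ i, MeasurableSet (s i)) →
      Measure.map (fun ω (i : Fin n) => Y i ω) ℙ (Set.pi Set.univ s)
        = ∏ i, expMeasure 1 (s i) := by
    intro s hs
    rw [Measure.map_apply (measurable_pi_lambda _ hmeas) (MeasurableSet.univ_pi hs)]
    have hpre : (fun ω (i : Fin n) => Y i ω) ⁻¹' Set.pi Set.univ s
        = ⋂ i ∈ Finset.univ, Y i ⁻¹' s i := by
      ext ω; simp [Set.mem_univ_pi]
    rw [hpre, hindep.measure_inter_preimage_eq_mul Finset.univ (fun i _ => hs i)]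
    refine Finset.prod_congr rfl fun i _ => ?_
    rw [← hdist i, Measure.map_apply (hmeas i) (hs i)]
  exact (Measure.pi_eq h).symm

lemma real_bound {u δ : ℝ} (hu0 : 0 < u) (hu1 : u ≤ 1) (hδ0 : 0 < δ) (hδu : δ < u) (m : ℕ) :
    (Real.exp (-u) * u ^ (m+1) / (m+1).factorial)⁻¹ * (((m:ℝ) + 1) * ((u - δ) ^ m / m.factorial))
      ≤ 3 * Real.exp δ * ((u - δ) / u) ^ m * ((m:ℝ) + 1) ^ 2 / u := by
  have hfact : ((m+1).factorial : ℝ) = ((m:ℝ) + 1) * m.factorial := by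
    rw [Nat.factorial_succ]; push_cast; ring
  have h1 : (m.factorial : ℝ) ≠ 0 := Nat.cast_ne_zero.2 (Nat.factorial_ne_zero m)
  have h2 : Real.exp u ≤ 3 * Real.exp δ := by
    have : Real.exp u ≤ Real.exp 1 := Real.exp_le_exp.2 hu1
    have h3 : Real.exp 1 < 2.7182818286 := Real.exp_one_lt_d9
    have h4 : (1:ℝ) ≤ Real.exp δ := Real.one_le_exp hδ0.le
    nlinarith
  have hC : (0:ℝ) ≤ ((m:ℝ) + 1) ^ 2 * (u - δ) ^ m / u ^ (m+1) := by
    have : (0:ℝ) ≤ u - δ := by linarith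
    positivity
  have e1 : (Real.exp (-u) * u ^ (m+1) / (m+1).factorial)⁻¹
      * (((m:ℝ) + 1) * ((u - δ) ^ m / m.factorial))
      = Real.exp u * (((m:ℝ) + 1) ^ 2 * (u - δ) ^ m / u ^ (m+1)) := by
    rw [Real.exp_neg, hfact]
    have h5 : u ^ (m+1) ≠ 0 := by positivity
    have h6 : Real.exp u ≠ 0 := (Real.exp_pos u).ne'
    field_simp
  have e2 : 3 * Real.exp δ * ((u - δ) / u) ^ m * ((m:ℝ) + 1) ^ 2 / u
      = (3 * Real.exp δ) * (((m:ℝ) + 1) ^ 2 * (u - δ) ^ m / u ^ (m+1)) := by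
    rw [div_pow, pow_succ]
    field_simp
    ring
  rw [e1, e2]
  exact mul_le_mul_of_nonneg_right h2 hC

theorem max_small_given_sum_small
    {Ω : Type*} [MeasureSpace Ω] [IsProbabilityMeasure (ℙ : Measure Ω)]
    (Y : (n : ℕ) → Fin n → Ω → ℝ)
    (hmeas : ∀ n i, Measurable (Y n i))
    (hindep : ∀ n, iIndepFun (Y n) ℙ)
    (hdist : ∀ n i, Measure.map (Y n i) ℙ = expMeasure 1)
    (u δ : ℝ) (hu0 : 0 < u) (hu1 : u ≤ 1) (hδ0 : 0 < δ) (hδu : δ < u) :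
    (∀ n : ℕ, 2 ≤ n →
      (ℙ[|{ω | ∑ i, Y n i ω ≤ u}]) {ω | ∃ i, δ ≤ Y n i ω} ≤
        ENNReal.ofReal (3 * Real.exp δ * ((u - δ) / u) ^ (n - 1) * n ^ 2 / u)) ∧
    Tendsto (fun n : ℕ => (ℙ[|{ω | ∑ i, Y n i ω ≤ u}]) {ω | ∀ i, Y n i ω < δ})
      atTop (nhds 1) := by
  have hφ : ∀ n, Measurable (fun ω (i : Fin n) => Y n i ω) :=
    fun n => measurable_pi_lambda _ (hmeas n)
  have hmap : ∀ n, Measure.map (fun ω (i : Fin n) => Y n i ω) ℙ = expPi n :=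
    fun n => map_pi _ (hmeas n) (hindep n) (hdist n)
  have hsmeas : ∀ n, MeasurableSet {ω | ∑ i, Y n i ω ≤ u} :=
    fun n => measurableSet_le (Finset.measurable_sum _ fun i _ => hmeas n i) measurable_const
  have hsP : ∀ n, ℙ {ω | ∑ i, Y n i ω ≤ u} = G n u := by
    intro n
    have hp : {ω | ∑ i, Y n i ω ≤ u}
        = (fun ω (i : Fin n) => Y n i ω) ⁻¹' {x | ∑ i, x i ≤ u} := rfl
    rw [hp, ← Measure.map_apply (hφ n) (measurableSet_sumle n u), hmap n]
    rfl
  have hlow : ∀ n, ENNReal.ofReal (Real.exp (-u) * u ^ n / n.factorial)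
      ≤ ℙ {ω | ∑ i, Y n i ω ≤ u} := fun n => (hsP n) ▸ le_G n u hu0.le
  have hLpos : ∀ n : ℕ, (0:ℝ) < Real.exp (-u) * u ^ n / n.factorial := by
    intro n
    have := Nat.factorial_pos n
    positivity
  have hne : ∀ n, ℙ {ω | ∑ i, Y n i ω ≤ u} ≠ 0 :=
    fun n => (lt_of_lt_of_le (ENNReal.ofReal_pos.2 (hLpos n)) (hlow n)).ne'
  have hApre : ∀ n, {ω | ∃ i, δ ≤ Y n i ω}
      = (fun ω (i : Fin n) => Y n i ω) ⁻¹' {x | ∃ i, δ ≤ x i} := fun n => rfl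
  have hBmeas : ∀ n, MeasurableSet {x : Fin n → ℝ | (∑ i, x i ≤ u) ∧ ∃ i, δ ≤ x i} := by
    intro n
    have : {x : Fin n → ℝ | (∑ i, x i ≤ u) ∧ ∃ i, δ ≤ x i}
        = {x | ∑ i, x i ≤ u} ∩ ⋃ i, {x | δ ≤ x i} := by ext; simp
    rw [this]
    exact (measurableSet_sumle _ _).inter
      (MeasurableSet.iUnion fun i => measurableSet_le measurable_const (measurable_pi_apply i))
  have hAmeas : ∀ n, MeasurableSet {ω | ∃ i, δ ≤ Y n i ω} := by
    intro n
    have : {ω | ∃ i, δ ≤ Y n i ω} = ⋃ i, {ω | δ ≤ Y n i ω} := by ext; simp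
    rw [this]
    exact MeasurableSet.iUnion fun i => measurableSet_le measurable_const (hmeas n i)
  have part1 : ∀ n : ℕ, 2 ≤ n →
      (ℙ[|{ω | ∑ i, Y n i ω ≤ u}]) {ω | ∃ i, δ ≤ Y n i ω} ≤
        ENNReal.ofReal (3 * Real.exp δ * ((u - δ) / u) ^ (n - 1) * n ^ 2 / u) := by
    intro n hn
    obtain ⟨m, rfl⟩ : ∃ m, n = m + 1 := ⟨n - 1, by omega⟩
    rw [cond_apply (hsmeas (m+1))]
    have hinter : {ω | ∑ i, Y (m+1) i ω ≤ u} ∩ {ω | ∃ i, δ ≤ Y (m+1) i ω}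
        = (fun ω (i : Fin (m+1)) => Y (m+1) i ω) ⁻¹'
          {x : Fin (m+1) → ℝ | (∑ i, x i ≤ u) ∧ ∃ i, δ ≤ x i} := by
      ext ω
      simp only [Set.mem_inter_iff, Set.mem_setOf_eq, Set.mem_preimage]
    have hPinter : ℙ ({ω | ∑ i, Y (m+1) i ω ≤ u} ∩ {ω | ∃ i, δ ≤ Y (m+1) i ω})
        ≤ (m + 1 : ℕ) * G m (u - δ) := by
      rw [hinter, ← Measure.map_apply (hφ (m+1)) (hBmeas (m+1)), hmap (m+1)]
      exact_mod_cast expPi_union_bound m hδ0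
    calc (ℙ {ω | ∑ i, Y (m+1) i ω ≤ u})⁻¹
          * ℙ ({ω | ∑ i, Y (m+1) i ω ≤ u} ∩ {ω | ∃ i, δ ≤ Y (m+1) i ω})
        ≤ (ENNReal.ofReal (Real.exp (-u) * u ^ (m+1) / (m+1).factorial))⁻¹
          * ((m + 1 : ℕ) * ENNReal.ofReal ((u - δ) ^ m / m.factorial)) := by
          refine mul_le_mul' (ENNReal.inv_le_inv' (hlow (m+1))) ?_
          exact hPinter.trans (mul_le_mul_right (G_le m _ (by linarith)) _)
      _ = ENNReal.ofReal ((Real.exp (-u) * u ^ (m+1) / (m+1).factorial)⁻¹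
            * (((m:ℝ) + 1) * ((u - δ) ^ m / m.factorial))) := by
          have hB0 : (0:ℝ) ≤ (u - δ) ^ m / m.factorial := by
            have : (0:ℝ) ≤ u - δ := by linarith
            positivity
          rw [← ENNReal.ofReal_inv_of_pos (hLpos (m+1))]
          rw [ENNReal.ofReal_mul (by positivity)]
          congr 1
          rw [ENNReal.ofReal_mul (by positivity)]
          congr 1
          rw [← ENNReal.ofReal_natCast]
          push_cast
          ring_nf
      _ ≤ ENNReal.ofReal (3 * Real.exp δ * ((u - δ) / u) ^ (m + 1 - 1) * (↑(m+1)) ^ 2 / u) := by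
          apply ENNReal.ofReal_le_ofReal
          simp only [Nat.add_sub_cancel]
          push_cast
          exact real_bound hu0 hu1 hδ0 hδu m
  refine ⟨part1, ?_⟩
  set r : ℝ := (u - δ) / u with hr
  have hr0 : 0 < r := div_pos (by linarith) hu0
  have hr1 : r < 1 := (div_lt_one hu0).2 (by linarith)
  have hb : Tendsto (fun n : ℕ => 3 * Real.exp δ * r ^ (n-1) * (n:ℝ)^2 / u) atTop (𝓝 0) := by
    have h0 : Tendsto (fun n : ℕ => (n:ℝ)^2 * r^n) atTop (𝓝 0) :=
      tendsto_pow_const_mul_const_pow_of_lt_one 2 hr0.le hr1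
    have h1 : Tendsto (fun n : ℕ => (3 * Real.exp δ / (u * r)) * ((n:ℝ)^2 * r^n))
        atTop (𝓝 0) := by simpa using h0.const_mul (3 * Real.exp δ / (u * r))
    apply h1.congr'
    filter_upwards [eventually_ge_atTop 1] with n hn
    have hrn : r ^ n = r ^ (n-1) * r := by
      rw [← pow_succ]
      congr 1
      omega
    rw [hrn]
    field_simp
  have hb' : Tendsto (fun n : ℕ =>
      ENNReal.ofReal (3 * Real.exp δ * r ^ (n-1) * (n:ℝ)^2 / u)) atTop (𝓝 0) := by
    rw [← ENNReal.ofReal_zero]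
    exact ENNReal.tendsto_ofReal hb
  have hg0 : Tendsto (fun n : ℕ => (ℙ[|{ω | ∑ i, Y n i ω ≤ u}]) {ω | ∃ i, δ ≤ Y n i ω})
      atTop (𝓝 0) := by
    refine tendsto_of_tendsto_of_tendsto_of_le_of_le' tendsto_const_nhds hb'
      (Eventually.of_forall fun n => zero_le) ?_
    filter_upwards [eventually_ge_atTop 2] with n hn
    exact part1 n hn
  have hcompl : ∀ n : ℕ, (ℙ[|{ω | ∑ i, Y n i ω ≤ u}]) {ω | ∀ i, Y n i ω < δ}
      = 1 - (ℙ[|{ω | ∑ i, Y n i ω ≤ u}]) {ω | ∃ i, δ ≤ Y n i ω} := by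
    intro n
    haveI : IsProbabilityMeasure (ℙ[|{ω | ∑ i, Y n i ω ≤ u}]) :=
      cond_isProbabilityMeasure (hne n)
    have hAc : {ω | ∀ i, Y n i ω < δ} = {ω | ∃ i, δ ≤ Y n i ω}ᶜ := by
      ext ω; simp [not_exists, not_le]
    rw [hAc, measure_compl (hAmeas n) (measure_ne_top _ _), measure_univ]
  have := ENNReal.Tendsto.sub (tendsto_const_nhds :
      Tendsto (fun _ : ℕ => (1:ℝ≥0∞)) atTop (𝓝 1)) hg0 (Or.inl ENNReal.one_ne_top)
  rw [tsub_zero] at this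
  exact this.congr fun n => (hcompl n).symm
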